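/- Let a and â be independent random variables each with Rayleigh density f(r) = 2r e^{−r²} (r ≥ 0), and let Z be independent of (a, â) with triangular density f_Z(z) = (2π − |z|)/(4π²) on [−2π, 2π]. Define the complex random variable α = a − â e^{iZ}. Then E[α] = √π/2 (as a real number) and E[|α − E[α]|²] = (8 − π)/4. -/

import Mathlib

open MeasureTheory ProbabilityTheory Real Set

/-- The Rayleigh density f(r) = 2r e^{-r²} for r ≥ 0, 0 otherwise. -/
noncomputable def rayleighPdf (r : ℝ) : ℝ := if 0 ≤ r then 2 * r * Real.exp (-r^2) else 0

/-- The triangular density f_Z(z) = (2π - |z|)/(4π²) for |z| ≤ 2π, 0 otherwise. -/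
noncomputable def triangularPdf (z : ℝ) : ℝ := if |z| ≤ 2*π then (2*π - |z|)/(4*π^2) else 0


lemma rayleighPdf_nonneg (r : ℝ) : 0 ≤ rayleighPdf r := by
  unfold rayleighPdf; split_ifs with h
  · positivity
  · exact le_refl 0

lemma rayleighPdf_meas : Measurable rayleighPdf :=
  Measurable.ite measurableSet_Ici (by fun_prop) measurable_const

lemma triangularPdf_nonneg (z : ℝ) : 0 ≤ triangularPdf z := by
  unfold triangularPdf; split_ifs with h
  · have := pi_pos
    exact div_nonneg (by linarith) (by positivity)
  · exact le_refl 0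

lemma triangularPdf_meas : Measurable triangularPdf :=
  Measurable.ite (measurableSet_le (by fun_prop) measurable_const) (by fun_prop) measurable_const

/-- rewrite `g * rayleighPdf` as an indicator -/
lemma ray_indicator (g : ℝ → ℝ) :
    (fun r => g r * rayleighPdf r)
      = Set.indicator (Ici (0:ℝ)) (fun r => g r * (2 * r * Real.exp (-r^2))) := by
  funext r
  unfold rayleighPdf
  by_cases h : 0 ≤ r <;> simp [Set.indicator, h]

lemma tri_indicator (g : ℝ → ℝ) :
    (fun z => g z * triangularPdf z)
      = Set.indicator (Icc (-(2*π)) (2*π)) (fun z => g z * ((2*π - |z|)/(4*π^2))) := by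
  funext z
  unfold triangularPdf
  by_cases h : |z| ≤ 2*π
  · rw [Set.indicator_of_mem (show z ∈ Icc (-(2*π)) (2*π) from mem_Icc.mpr (abs_le.mp h)), if_pos h]
  · rw [Set.indicator_of_notMem (fun hc => h (abs_le.mpr (mem_Icc.mp hc))), if_neg h, mul_zero]

lemma rpow_pow2 (x : ℝ) : x ^ (2:ℝ) = x ^ 2 := by
  rw [show (2:ℝ) = ((2:ℕ):ℝ) by norm_num, Real.rpow_natCast]

lemma ray_moment1 : ∫ r, r * rayleighPdf r = Real.sqrt π / 2 := by
  rw [ray_indicator, integral_indicator measurableSet_Ici, integral_Ici_eq_integral_Ioi]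
  have h := integral_rpow_mul_exp_neg_rpow (p := 2) (q := 2) (by norm_num) (by norm_num)
  have he : ∀ x : ℝ, x ∈ Ioi (0:ℝ) →
      x * (2 * x * Real.exp (-x^2)) = 2 * (x ^ (2:ℝ) * Real.exp (-x ^ (2:ℝ))) := by
    intro x _; rw [rpow_pow2]; ring
  rw [setIntegral_congr_fun measurableSet_Ioi he, integral_const_mul, h,
    show (2+1)/(2:ℝ) = 1/2 + 1 by norm_num, Real.Gamma_add_one (by norm_num),
    Real.Gamma_one_half_eq]
  ring

lemma ray_moment2 : ∫ r, r^2 * rayleighPdf r = 1 := by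
  rw [ray_indicator, integral_indicator measurableSet_Ici, integral_Ici_eq_integral_Ioi]
  have h := integral_rpow_mul_exp_neg_rpow (p := 2) (q := 3) (by norm_num) (by norm_num)
  have he : ∀ x : ℝ, x ∈ Ioi (0:ℝ) →
      x^2 * (2 * x * Real.exp (-x^2)) = 2 * (x ^ (3:ℝ) * Real.exp (-x ^ (2:ℝ))) := by
    intro x _
    rw [rpow_pow2, show (3:ℝ) = ((3:ℕ):ℝ) by norm_num, Real.rpow_natCast]; ring
  rw [setIntegral_congr_fun measurableSet_Ioi he, integral_const_mul, h,
    show (3+1)/(2:ℝ) = 2 by norm_num, Real.Gamma_two]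
  ring

lemma ray_integrable_aux (n : ℕ) : Integrable (fun r => r^n * rayleighPdf r) := by
  rw [ray_indicator]
  apply (IntegrableOn.integrable_indicator · measurableSet_Ici)
  rw [integrableOn_Ici_iff_integrableOn_Ioi]
  have h := integrableOn_rpow_mul_exp_neg_mul_sq (b := 1) one_pos
    (s := (n:ℝ)+1) (by have := Nat.cast_nonneg (α := ℝ) n; linarith)
  refine IntegrableOn.congr_fun (h.const_mul 2) (fun x hx => ?_) measurableSet_Ioi
  have hx1 : x ^ ((n:ℝ)+1) = x^(n+1) := by
    rw [show ((n:ℝ)+1) = ((n+1:ℕ):ℝ) by push_cast; ring, Real.rpow_natCast]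
  rw [hx1, pow_succ, neg_one_mul]; ring

lemma ray_integrable1 : Integrable (fun r => r * rayleighPdf r) := by
  have := ray_integrable_aux 1
  simpa using this

lemma ray_integrable2 : Integrable (fun r => r^2 * rayleighPdf r) := ray_integrable_aux 2

lemma tri_interval (g : ℝ → ℝ) :
    ∫ z, g z * triangularPdf z
      = (∫ z in (-(2*π))..(2*π), g z * (2*π - |z|)) / (4*π^2) := by
  rw [tri_indicator, integral_indicator measurableSet_Icc, integral_Icc_eq_integral_Ioc,
    ← intervalIntegral.integral_of_le (by have := pi_pos; linarith : -(2*π) ≤ 2*π)]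
  simp_rw [mul_div_assoc']
  rw [intervalIntegral.integral_div]

lemma cos_tri : ∫ z, Real.cos z * triangularPdf z = 0 := by
  rw [tri_interval]
  have hc : Continuous fun z : ℝ => Real.cos z * (2*π - |z|) := by fun_prop
  have hi1 : IntervalIntegrable _ volume (-(2*π)) 0 := hc.intervalIntegrable _ _
  have hi2 : IntervalIntegrable _ volume 0 (2*π) := hc.intervalIntegrable _ _
  rw [← intervalIntegral.integral_add_adjacent_intervals (b := 0) hi1 hi2]
  have h1 : ∫ z in (-(2*π))..0, Real.cos z * (2*π - |z|)
      = ∫ z in (-(2*π))..0, Real.cos z * (2*π + z) := by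
    apply intervalIntegral.integral_congr
    intro z hz
    beta_reduce
    rw [uIcc_of_le (by have := pi_pos; linarith)] at hz
    rw [abs_of_nonpos (hz.2)]
    ring
  have h2 : ∫ z in (0:ℝ)..(2*π), Real.cos z * (2*π - |z|)
      = ∫ z in (0:ℝ)..(2*π), Real.cos z * (2*π - z) := by
    apply intervalIntegral.integral_congr
    intro z hz
    beta_reduce
    rw [uIcc_of_le (by have := pi_pos; linarith)] at hz
    rw [abs_of_nonneg (hz.1)]
  have e1 : ∫ z in (-(2*π))..(0), Real.cos z * (2*π + z) = 0 := by
    have hint : IntervalIntegrable (fun z => Real.cos z * (2*π + z)) volume (-(2*π)) (0) := by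
      apply Continuous.intervalIntegrable; fun_prop
    rw [intervalIntegral.integral_eq_sub_of_hasDerivAt
      (f := fun z => (2*π + z) * Real.sin z + Real.cos z)
      (f' := fun z => Real.cos z * (2*π + z))
      (fun x _ => by
        have h := (((hasDerivAt_id' (x := x)).const_add (2*π)).mul (Real.hasDerivAt_sin x)).add
          (Real.hasDerivAt_cos x)
        exact h.congr_deriv (by ring))
      hint]
    simp [Real.sin_two_pi, Real.cos_two_pi]
  have e2 : ∫ z in (0:ℝ)..(2*π), Real.cos z * (2*π - z) = 0 := by
    have hint : IntervalIntegrable (fun z => Real.cos z * (2*π - z)) volume (0:ℝ) (2*π) := by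
      apply Continuous.intervalIntegrable; fun_prop
    rw [intervalIntegral.integral_eq_sub_of_hasDerivAt
      (f := fun z => (2*π - z) * Real.sin z - Real.cos z)
      (f' := fun z => Real.cos z * (2*π - z))
      (fun x _ => by
        have h := (((hasDerivAt_id' (x := x)).const_sub (2*π)).mul (Real.hasDerivAt_sin x)).sub
          (Real.hasDerivAt_cos x)
        exact h.congr_deriv (by ring))
      hint]
    simp [Real.sin_two_pi, Real.cos_two_pi]
  rw [h1, h2, e1, e2]
  simp

lemma sin_tri : ∫ z, Real.sin z * triangularPdf z = 0 := by
  rw [tri_interval]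
  have hc : Continuous fun z : ℝ => Real.sin z * (2*π - |z|) := by fun_prop
  have hi1 : IntervalIntegrable _ volume (-(2*π)) 0 := hc.intervalIntegrable _ _
  have hi2 : IntervalIntegrable _ volume 0 (2*π) := hc.intervalIntegrable _ _
  rw [← intervalIntegral.integral_add_adjacent_intervals (b := 0) hi1 hi2]
  have h1 : ∫ z in (-(2*π))..0, Real.sin z * (2*π - |z|)
      = ∫ z in (-(2*π))..0, Real.sin z * (2*π + z) := by
    apply intervalIntegral.integral_congr
    intro z hz
    beta_reduce
    rw [uIcc_of_le (by have := pi_pos; linarith)] at hz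
    rw [abs_of_nonpos (hz.2)]
    ring
  have h2 : ∫ z in (0:ℝ)..(2*π), Real.sin z * (2*π - |z|)
      = ∫ z in (0:ℝ)..(2*π), Real.sin z * (2*π - z) := by
    apply intervalIntegral.integral_congr
    intro z hz
    beta_reduce
    rw [uIcc_of_le (by have := pi_pos; linarith)] at hz
    rw [abs_of_nonneg (hz.1)]
  have e1 : ∫ z in (-(2*π))..(0), Real.sin z * (2*π + z) = -(2*π) := by
    have hint : IntervalIntegrable (fun z => Real.sin z * (2*π + z)) volume (-(2*π)) (0) := by
      apply Continuous.intervalIntegrable; fun_prop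
    rw [intervalIntegral.integral_eq_sub_of_hasDerivAt
      (f := fun z => -((2*π + z) * Real.cos z) + Real.sin z)
      (f' := fun z => Real.sin z * (2*π + z))
      (fun x _ => by
        have h := ((((hasDerivAt_id' (x := x)).const_add (2*π)).mul (Real.hasDerivAt_cos x)).neg).add
          (Real.hasDerivAt_sin x)
        exact h.congr_deriv (by ring))
      hint]
    simp [Real.sin_two_pi, Real.cos_two_pi]
  have e2 : ∫ z in (0:ℝ)..(2*π), Real.sin z * (2*π - z) = 2*π := by
    have hint : IntervalIntegrable (fun z => Real.sin z * (2*π - z)) volume (0:ℝ) (2*π) := by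
      apply Continuous.intervalIntegrable; fun_prop
    rw [intervalIntegral.integral_eq_sub_of_hasDerivAt
      (f := fun z => -((2*π - z) * Real.cos z) - Real.sin z)
      (f' := fun z => Real.sin z * (2*π - z))
      (fun x _ => by
        have h := ((((hasDerivAt_id' (x := x)).const_sub (2*π)).mul (Real.hasDerivAt_cos x)).neg).sub
          (Real.hasDerivAt_sin x)
        exact h.congr_deriv (by ring))
      hint]
    simp [Real.sin_two_pi, Real.cos_two_pi]
  rw [h1, h2, e1, e2]
  simp

section Transfer

variable {Ω : Type*} [MeasureSpace Ω]

lemma integral_density {X : Ω → ℝ} {p : ℝ → ℝ} (hX : Measurable X)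
    (hp : Measurable p) (hp0 : ∀ r, 0 ≤ p r)
    (hlaw : Measure.map X ℙ = volume.withDensity (fun r => ENNReal.ofReal (p r)))
    {g : ℝ → ℝ} (hg : Measurable g) :
    ∫ ω, g (X ω) ∂ℙ = ∫ r, g r * p r := by
  rw [← integral_map hX.aemeasurable hg.aestronglyMeasurable, hlaw,
    show (fun r => ENNReal.ofReal (p r)) = (fun r => ((Real.toNNReal (p r) : NNReal) : ENNReal)) from rfl,
    integral_withDensity_eq_integral_smul hp.real_toNNReal g]
  congr 1; funext r
  rw [NNReal.smul_def, Real.coe_toNNReal _ (hp0 r), smul_eq_mul, mul_comm]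

lemma integrable_density {X : Ω → ℝ} {p : ℝ → ℝ} (hX : Measurable X)
    (hp : Measurable p) (hp0 : ∀ r, 0 ≤ p r)
    (hlaw : Measure.map X ℙ = volume.withDensity (fun r => ENNReal.ofReal (p r)))
    {g : ℝ → ℝ} (hg : Measurable g) :
    Integrable (fun ω => g (X ω)) ℙ ↔ Integrable (fun r => g r * p r) volume := by
  have h1 : Integrable (fun ω => g (X ω)) ℙ ↔ Integrable g (Measure.map X ℙ) :=
    (integrable_map_measure hg.aestronglyMeasurable hX.aemeasurable).symm
  rw [h1, hlaw, integrable_withDensity_iff hp.ennreal_ofReal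
    (ae_of_all _ fun x => ENNReal.ofReal_lt_top)]
  have : (fun x => g x * (ENNReal.ofReal (p x)).toReal) = fun x => g x * p x :=
    funext fun x => by rw [ENNReal.toReal_ofReal (hp0 x)]
  rw [this]

end Transfer

/-- For a, â independent Rayleigh random variables and Z independent of (a, â) with the
triangular density, the complex random variable α = a - â e^{iZ} has mean √π/2 and
variance E[|α - E α|²] = (8 - π)/4. -/
theorem mean_variance_of_channel_difference
    {Ω : Type*} [MeasureSpace Ω] [IsProbabilityMeasure (ℙ : Measure Ω)]
    (a ahat Z : Ω → ℝ) (ha : Measurable a) (hahat : Measurable ahat) (hZ : Measurable Z)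
    (h_indep : IndepFun a ahat ℙ)
    (h_indepZ : IndepFun (fun ω => (a ω, ahat ω)) Z ℙ)
    (halaw : Measure.map a ℙ = volume.withDensity (fun r => ENNReal.ofReal (rayleighPdf r)))
    (hahatlaw : Measure.map ahat ℙ = volume.withDensity (fun r => ENNReal.ofReal (rayleighPdf r)))
    (hZlaw : Measure.map Z ℙ = volume.withDensity (fun z => ENNReal.ofReal (triangularPdf z))) :
    (∫ ω, ((a ω : ℂ) - (ahat ω : ℂ) * Complex.exp (Complex.I * (Z ω : ℂ))) ∂ℙ)
        = ((Real.sqrt π / 2 : ℝ) : ℂ) ∧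
    (∫ ω, ‖(((a ω : ℂ) - (ahat ω : ℂ) * Complex.exp (Complex.I * (Z ω : ℂ)))
        - ∫ ω', ((a ω' : ℂ) - (ahat ω' : ℂ) * Complex.exp (Complex.I * (Z ω' : ℂ))) ∂ℙ)‖ ^ 2 ∂ℙ)
      = (8 - π)/4 := by
  have hπ := pi_pos
  set μ : ℝ := Real.sqrt π / 2 with hμ
  -- moments
  have Ea : ∫ ω, a ω ∂ℙ = μ := by
    have h := integral_density (g := fun r => r) ha rayleighPdf_meas rayleighPdf_nonneg halaw
      measurable_id
    exact h.trans ray_moment1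
  have Eahat : ∫ ω, ahat ω ∂ℙ = μ := by
    have h := integral_density (g := fun r => r) hahat rayleighPdf_meas rayleighPdf_nonneg
      hahatlaw measurable_id
    exact h.trans ray_moment1
  have Ea2 : ∫ ω, (a ω)^2 ∂ℙ = 1 := by
    have h := integral_density (g := fun r => r^2) ha rayleighPdf_meas rayleighPdf_nonneg halaw
      (by fun_prop)
    exact h.trans ray_moment2
  have Eahat2 : ∫ ω, (ahat ω)^2 ∂ℙ = 1 := by
    have h := integral_density (g := fun r => r^2) hahat rayleighPdf_meas rayleighPdf_nonneg
      hahatlaw (by fun_prop)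
    exact h.trans ray_moment2
  have Ecos : ∫ ω, Real.cos (Z ω) ∂ℙ = 0 := by
    have h := integral_density (g := Real.cos) hZ triangularPdf_meas triangularPdf_nonneg hZlaw
      Real.measurable_cos
    exact h.trans cos_tri
  have Esin : ∫ ω, Real.sin (Z ω) ∂ℙ = 0 := by
    have h := integral_density (g := Real.sin) hZ triangularPdf_meas triangularPdf_nonneg hZlaw
      Real.measurable_sin
    exact h.trans sin_tri
  -- integrability
  have Ia : Integrable a ℙ :=
    (integrable_density (g := fun r => r) ha rayleighPdf_meas rayleighPdf_nonneg halaw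
      measurable_id).mpr ray_integrable1
  have Iahat : Integrable ahat ℙ :=
    (integrable_density (g := fun r => r) hahat rayleighPdf_meas rayleighPdf_nonneg hahatlaw
      measurable_id).mpr ray_integrable1
  have Ia2 : Integrable (fun ω => (a ω)^2) ℙ :=
    (integrable_density (g := fun r => r^2) ha rayleighPdf_meas rayleighPdf_nonneg halaw
      (by fun_prop)).mpr ray_integrable2
  have Iahat2 : Integrable (fun ω => (ahat ω)^2) ℙ :=
    (integrable_density (g := fun r => r^2) hahat rayleighPdf_meas rayleighPdf_nonneg hahatlaw
      (by fun_prop)).mpr ray_integrable2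
  have IahatCos : Integrable (fun ω => ahat ω * Real.cos (Z ω)) ℙ := by
    refine Integrable.mono' Iahat.abs
      ((hahat.mul (Real.measurable_cos.comp hZ)).aestronglyMeasurable)
      (ae_of_all _ fun ω => ?_)
    rw [Real.norm_eq_abs, abs_mul]
    have h1 := Real.abs_cos_le_one (Z ω)
    have h2 := abs_nonneg (ahat ω)
    nlinarith
  have IahatSin : Integrable (fun ω => ahat ω * Real.sin (Z ω)) ℙ := by
    refine Integrable.mono' Iahat.abs
      ((hahat.mul (Real.measurable_sin.comp hZ)).aestronglyMeasurable)
      (ae_of_all _ fun ω => ?_)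
    rw [Real.norm_eq_abs, abs_mul]
    have h1 := Real.abs_sin_le_one (Z ω)
    have h2 := abs_nonneg (ahat ω)
    nlinarith
  -- independence products
  have EahatCos : ∫ ω, ahat ω * Real.cos (Z ω) ∂ℙ = 0 := by
    have hind : IndepFun ahat (fun ω => Real.cos (Z ω)) ℙ :=
      h_indepZ.comp measurable_snd Real.measurable_cos
    have h := hind.integral_mul_eq_mul_integral hahat.aestronglyMeasurable
      ((Real.measurable_cos.comp hZ).aestronglyMeasurable)
    calc ∫ ω, ahat ω * Real.cos (Z ω) ∂ℙ
        = ∫ ω, (ahat * fun ω => Real.cos (Z ω)) ω ∂ℙ := rfl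
      _ = (∫ ω, ahat ω ∂ℙ) * ∫ ω, Real.cos (Z ω) ∂ℙ := h
      _ = 0 := by rw [Ecos, mul_zero]
  have EahatSin : ∫ ω, ahat ω * Real.sin (Z ω) ∂ℙ = 0 := by
    have hind : IndepFun ahat (fun ω => Real.sin (Z ω)) ℙ :=
      h_indepZ.comp measurable_snd Real.measurable_sin
    have h := hind.integral_mul_eq_mul_integral hahat.aestronglyMeasurable
      ((Real.measurable_sin.comp hZ).aestronglyMeasurable)
    calc ∫ ω, ahat ω * Real.sin (Z ω) ∂ℙ
        = ∫ ω, (ahat * fun ω => Real.sin (Z ω)) ω ∂ℙ := rfl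
      _ = (∫ ω, ahat ω ∂ℙ) * ∫ ω, Real.sin (Z ω) ∂ℙ := h
      _ = 0 := by rw [Esin, mul_zero]
  have Ecross : ∫ ω, (a ω - μ) * ahat ω * Real.cos (Z ω) ∂ℙ = 0 := by
    have hind : IndepFun (fun ω => (a ω - μ) * ahat ω) (fun ω => Real.cos (Z ω)) ℙ :=
      h_indepZ.comp ((measurable_fst.sub measurable_const).mul measurable_snd)
        Real.measurable_cos
    have h := hind.integral_mul_eq_mul_integral (((ha.sub measurable_const).mul hahat).aestronglyMeasurable)
      ((Real.measurable_cos.comp hZ).aestronglyMeasurable)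
    calc ∫ ω, (a ω - μ) * ahat ω * Real.cos (Z ω) ∂ℙ
        = ∫ ω, ((fun ω => (a ω - μ) * ahat ω) * fun ω => Real.cos (Z ω)) ω ∂ℙ := rfl
      _ = (∫ ω, (a ω - μ) * ahat ω ∂ℙ) * ∫ ω, Real.cos (Z ω) ∂ℙ := h
      _ = 0 := by rw [Ecos, mul_zero]
  have Icross0 : Integrable (fun ω => (a ω - μ) * ahat ω) ℙ := by
    have hind : IndepFun (fun ω => a ω - μ) ahat ℙ :=
      h_indep.comp (measurable_id.sub measurable_const) measurable_id
    have h := hind.integrable_mul (Ia.sub (integrable_const μ)) Iahat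
    exact h
  have IcrossCos : Integrable (fun ω => (a ω - μ) * ahat ω * Real.cos (Z ω)) ℙ := by
    refine Integrable.mono' Icross0.abs
      ((((ha.sub measurable_const).mul hahat).mul (Real.measurable_cos.comp hZ)).aestronglyMeasurable)
      (ae_of_all _ fun ω => ?_)
    rw [Real.norm_eq_abs, abs_mul]
    have h1 := Real.abs_cos_le_one (Z ω)
    have h2 := abs_nonneg ((a ω - μ) * ahat ω)
    nlinarith
  -- the mean
  have hmean : (∫ ω, ((a ω : ℂ) - (ahat ω : ℂ) * Complex.exp (Complex.I * (Z ω : ℂ))) ∂ℙ)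
      = ((μ : ℝ) : ℂ) := by
    have hpt : ∀ ω, ((a ω : ℂ) - (ahat ω : ℂ) * Complex.exp (Complex.I * (Z ω : ℂ)))
        = ((a ω - ahat ω * Real.cos (Z ω) : ℝ) : ℂ)
          + ((-(ahat ω * Real.sin (Z ω)) : ℝ)) • Complex.I := by
      intro ω
      rw [mul_comm Complex.I, Complex.exp_mul_I, Complex.real_smul,
        ← Complex.ofReal_cos, ← Complex.ofReal_sin]
      push_cast
      ring
    simp_rw [hpt]
    have If : Integrable (fun ω => ((a ω - ahat ω * Real.cos (Z ω) : ℝ) : ℂ)) ℙ :=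
      (Ia.sub IahatCos).ofReal
    have Ig : Integrable (fun ω => ((-(ahat ω * Real.sin (Z ω)) : ℝ)) • Complex.I) ℙ :=
      (IahatSin.neg).smul_const Complex.I
    have hre : ∫ ω, ((a ω - ahat ω * Real.cos (Z ω) : ℝ) : ℂ) ∂ℙ
        = ((∫ ω, (a ω - ahat ω * Real.cos (Z ω)) ∂ℙ : ℝ) : ℂ) := integral_ofReal
    rw [integral_add If Ig,
      hre, integral_smul_const, integral_sub Ia IahatCos, Ea, EahatCos]
    have : ∫ ω, -(ahat ω * Real.sin (Z ω)) ∂ℙ = 0 := by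
      rw [integral_neg, EahatSin, neg_zero]
    rw [this, zero_smul, add_zero, sub_zero]
  refine ⟨hmean, ?_⟩
  -- the variance
  rw [hmean]
  have hvar_pt : ∀ ω, ‖(((a ω : ℂ) - (ahat ω : ℂ)
        * Complex.exp (Complex.I * (Z ω : ℂ))) - ((μ : ℝ) : ℂ))‖ ^ 2
      = (a ω - μ)^2 + (ahat ω)^2 - 2*((a ω - μ) * ahat ω * Real.cos (Z ω)) := by
    intro ω
    have hw : ((a ω : ℂ) - (ahat ω : ℂ) * Complex.exp (Complex.I * (Z ω : ℂ))) - ((μ : ℝ) : ℂ)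
        = ((a ω - μ - ahat ω * Real.cos (Z ω) : ℝ) : ℂ)
          + ((-(ahat ω * Real.sin (Z ω)) : ℝ) : ℂ) * Complex.I := by
      rw [mul_comm Complex.I, Complex.exp_mul_I, ← Complex.ofReal_cos, ← Complex.ofReal_sin]
      push_cast
      ring
    rw [hw, Complex.sq_norm, Complex.normSq_add_mul_I]
    have hcs := Real.sin_sq_add_cos_sq (Z ω)
    linear_combination (ahat ω)^2 * hcs
  simp_rw [hvar_pt]
  have Isub : Integrable (fun ω => (a ω - μ)^2) ℙ := by
    have he : (fun ω => (a ω - μ)^2) = fun ω => (a ω)^2 - 2*μ*(a ω) + μ^2 :=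
      funext fun ω => by ring
    rw [he]
    exact (Ia2.sub (Ia.const_mul (2*μ))).add (integrable_const _)
  have hsub : ∫ ω, (a ω - μ)^2 ∂ℙ = 1 - μ^2 := by
    have he : (fun ω => (a ω - μ)^2) = fun ω => (a ω)^2 - 2*μ*(a ω) + μ^2 :=
      funext fun ω => by ring
    have h1 : Integrable (fun ω => (a ω)^2 - 2*μ*(a ω)) ℙ := Ia2.sub (Ia.const_mul (2*μ))
    rw [he, integral_add h1 (integrable_const _),
      integral_sub Ia2 (Ia.const_mul (2*μ)), integral_const_mul, Ea2, Ea, integral_const]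
    simp
    ring
  have I12 : Integrable (fun ω => (a ω - μ)^2 + (ahat ω)^2) ℙ := Isub.add Iahat2
  have I3 : Integrable (fun ω => 2 * ((a ω - μ) * ahat ω * Real.cos (Z ω))) ℙ :=
    IcrossCos.const_mul 2
  rw [integral_sub I12 I3,
    integral_add Isub Iahat2, integral_const_mul, hsub, Eahat2, Ecross, mul_zero, sub_zero]
  have hμ2 : μ^2 = π/4 := by
    rw [hμ, div_pow, Real.sq_sqrt hπ.le]
    norm_num
  rw [hμ2]
  ring
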